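/- The graph G(m,n) contains no induced subgraph isomorphic to the 5-cycle C_5. -/

import Mathlib

/-- The graph `G(m,n)`: vertices are pairs `(i,j)` (0-indexed, corresponding to
`x_{i+1,j+1}`), and `x_{i,j} ~ x_{k,l}` iff (`i < k` and `j > l`) or (`i > k` and `j < l`). -/
def gridGraph (m n : ℕ) : SimpleGraph (Fin m × Fin n) where
  Adj u v := (u.1 < v.1 ∧ v.2 < u.2) ∨ (v.1 < u.1 ∧ u.2 < v.2)
  symm := ⟨fun u v h => Or.symm h⟩
  loopless := ⟨fun u h => by rcases h with ⟨h, -⟩ | ⟨h, -⟩ <;> exact absurd h (lt_irrefl _)⟩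

/-- The 5-cycle graph on `Fin 5`. -/
def cycle5 : SimpleGraph (Fin 5) := SimpleGraph.fromRel (fun i j => j = i + 1)

set_option maxHeartbeats 1600000 in
/-- `G(m,n)` has no induced subgraph isomorphic to the 5-cycle. -/
theorem stmt3 (m n : ℕ) :
    ¬ ∃ f : Fin 5 → Fin m × Fin n, Function.Injective f ∧
      ∀ s t : Fin 5, (gridGraph m n).Adj (f s) (f t) ↔ cycle5.Adj s t := by
  rintro ⟨f, hinj, hadj⟩
  have key : ∀ s t : Fin 5, ((f s).1.val < (f t).1.val ∧ (f t).2.val < (f s).2.val ∨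
      (f t).1.val < (f s).1.val ∧ (f s).2.val < (f t).2.val) ↔ cycle5.Adj s t := by
    intro s t
    rw [← hadj s t]
    simp only [gridGraph, Fin.lt_def]
  have cyc : ∀ s t : Fin 5, cycle5.Adj s t ↔ (s ≠ t ∧ (t = s + 1 ∨ s = t + 1)) := by
    intro s t
    simp [cycle5, SimpleGraph.fromRel_adj]
  have h01 := (key 0 1).mpr ((cyc 0 1).mpr (by decide))
  have h12 := (key 1 2).mpr ((cyc 1 2).mpr (by decide))
  have h23 := (key 2 3).mpr ((cyc 2 3).mpr (by decide))
  have h34 := (key 3 4).mpr ((cyc 3 4).mpr (by decide))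
  have h40 := (key 4 0).mpr ((cyc 4 0).mpr (by decide))
  have n02 : ¬ ((f 0).1.val < (f 2).1.val ∧ (f 2).2.val < (f 0).2.val ∨ (f 2).1.val < (f 0).1.val ∧ (f 0).2.val < (f 2).2.val) := fun h => (by decide : ¬ ((0:Fin 5) ≠ 2 ∧ ((2:Fin 5) = 0 + 1 ∨ (0:Fin 5) = 2 + 1))) ((cyc 0 2).mp ((key 0 2).mp h))
  have n13 : ¬ ((f 1).1.val < (f 3).1.val ∧ (f 3).2.val < (f 1).2.val ∨ (f 3).1.val < (f 1).1.val ∧ (f 1).2.val < (f 3).2.val) := fun h => (by decide : ¬ ((1:Fin 5) ≠ 3 ∧ ((3:Fin 5) = 1 + 1 ∨ (1:Fin 5) = 3 + 1))) ((cyc 1 3).mp ((key 1 3).mp h))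
  have n24 : ¬ ((f 2).1.val < (f 4).1.val ∧ (f 4).2.val < (f 2).2.val ∨ (f 4).1.val < (f 2).1.val ∧ (f 2).2.val < (f 4).2.val) := fun h => (by decide : ¬ ((2:Fin 5) ≠ 4 ∧ ((4:Fin 5) = 2 + 1 ∨ (2:Fin 5) = 4 + 1))) ((cyc 2 4).mp ((key 2 4).mp h))
  have n30 : ¬ ((f 3).1.val < (f 0).1.val ∧ (f 0).2.val < (f 3).2.val ∨ (f 0).1.val < (f 3).1.val ∧ (f 3).2.val < (f 0).2.val) := fun h => (by decide : ¬ ((3:Fin 5) ≠ 0 ∧ ((0:Fin 5) = 3 + 1 ∨ (3:Fin 5) = 0 + 1))) ((cyc 3 0).mp ((key 3 0).mp h))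
  have n41 : ¬ ((f 4).1.val < (f 1).1.val ∧ (f 1).2.val < (f 4).2.val ∨ (f 1).1.val < (f 4).1.val ∧ (f 4).2.val < (f 1).2.val) := fun h => (by decide : ¬ ((4:Fin 5) ≠ 1 ∧ ((1:Fin 5) = 4 + 1 ∨ (4:Fin 5) = 1 + 1))) ((cyc 4 1).mp ((key 4 1).mp h))
  omega
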